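/- The Sorgenfrey line is a strong PP-space: for every dense set D ⊆ ℝ (in the Sorgenfrey topology), the covers U_{i,n} = [(i−1)/n, i/n) for i ∈ ℤ, n ∈ ℕ, together with points x_{i,n} ∈ [i/n, (i+1)/n) ∩ D, satisfy that whenever x ∈ U_{i_n,n} for all n, the points x_{i_n,n} converge to x in the Sorgenfrey topology. -/

import Mathlib

open Filter Set

/-- The Sorgenfrey (lower limit) topology on `ℝ`, generated by half-open intervals `[a, b)`. -/
def sorgenfrey : TopologicalSpace ℝ :=
  TopologicalSpace.generateFrom {s : Set ℝ | ∃ a b : ℝ, a < b ∧ s = Set.Ico a b}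

/-- The Sorgenfrey line is a strong PP-space: given a dense `D`, the covers
`U (i, n) = [(i - 1)/(n+1), i/(n+1))` together with points
`x i n ∈ [i/(n+1), (i+1)/(n+1)) ∩ D` witness the strong PP-property: whenever
`r ∈ U (idx n, n)` for all `n`, the points `x (idx n) n` converge to `r`. -/
theorem sorgenfrey_strong_PP (D : Set ℝ) (hD : @Dense ℝ sorgenfrey D)
    (x : ℤ → ℕ → ℝ)
    (hx : ∀ (i : ℤ) (n : ℕ),
      x i n ∈ Set.Ico ((i : ℝ) / (n + 1)) (((i : ℝ) + 1) / (n + 1)) ∩ D) :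
    ∀ (r : ℝ) (idx : ℕ → ℤ),
      (∀ n : ℕ, r ∈ Set.Ico (((idx n : ℝ) - 1) / (n + 1)) ((idx n : ℝ) / (n + 1))) →
      Tendsto (fun n => x (idx n) n) atTop (@nhds ℝ sorgenfrey r) := by
  intro r idx hr
  rw [sorgenfrey, TopologicalSpace.nhds_generateFrom]
  simp only [tendsto_iInf, tendsto_principal]
  rintro s ⟨hrs, a, b, hab, rfl⟩
  obtain ⟨ha, hb⟩ := hrs
  -- eventually 2/(n+1) ≤ b - r
  have h2 : Tendsto (fun n : ℕ => 2 / ((n : ℝ) + 1)) atTop (nhds 0) := by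
    have := tendsto_one_div_add_atTop_nhds_zero_nat (𝕜 := ℝ)
    have := this.const_mul (2 : ℝ)
    simpa [mul_one_div, div_eq_mul_inv] using this
  have hev : ∀ᶠ n : ℕ in atTop, 2 / ((n : ℝ) + 1) < b - r :=
    h2.eventually_lt_const (by linarith : (0 : ℝ) < b - r)
  filter_upwards [hev] with n hn
  have hn1 : (0 : ℝ) < (n : ℝ) + 1 := by positivity
  obtain ⟨hr1, hr2⟩ := hr n
  obtain ⟨⟨hx1, hx2⟩, _⟩ := hx (idx n) n
  constructor
  · linarith
  · have key : ((idx n : ℝ) + 1) / (n + 1) = ((idx n : ℝ) - 1) / (n + 1) + 2 / (n + 1) := by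
      field_simp
      ring
    linarith [key ▸ hx2]
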